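/- Let Q(i) satisfy the GreenLab recursion Q(i) = P·(1 − exp(−c·S(i))) with S(i) = s·Q(i−1) for constants P, c, s > 0 (leaf area proportional to previous production, needles living one cycle). Then the map F(Q) = P(1 − exp(−c·s·Q)) has a unique fixed point Q* > 0 if and only if P·c·s > 1, and Q* = 0 is the only nonnegative fixed point when P·c·s ≤ 1. -/

import Mathlib

theorem greenlab_fixed_point_threshold
    (P c s : ℝ) (hP : 0 < P) (hc : 0 < c) (hs : 0 < s) :
    ((∃! Q : ℝ, 0 < Q ∧ P * (1 - Real.exp (-(c * s) * Q)) = Q) ↔ 1 < P * c * s) ∧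
    (P * c * s ≤ 1 → ∀ Q : ℝ, 0 ≤ Q → P * (1 - Real.exp (-(c * s) * Q)) = Q → Q = 0) := by
  have ha0 : 0 < c * s := mul_pos hc hs
  -- Part 2 key: if P*c*s ≤ 1, there is no positive fixed point
  have key : P * c * s ≤ 1 → ∀ Q : ℝ, 0 < Q → P * (1 - Real.exp (-(c * s) * Q)) = Q → False := by
    intro h Q hQ hfix
    have hx : -((c * s) * Q) ≠ 0 := by
      have : 0 < (c * s) * Q := mul_pos ha0 hQ
      linarith
    have hlt := Real.add_one_lt_exp hx
    have hE : Real.exp (-(c * s) * Q) = Real.exp (-((c * s) * Q)) := by ring_nf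
    rw [hE] at hfix
    nlinarith [mul_pos hP hQ, mul_pos ha0 hQ]
  -- Uniqueness helper: two distinct positive fixed points are impossible
  have hlt : ∀ Q1 Q2 : ℝ, 0 < Q1 → Q1 < Q2 →
      P * (1 - Real.exp (-(c * s) * Q1)) = Q1 →
      P * (1 - Real.exp (-(c * s) * Q2)) = Q2 → False := by
    intro Q1 Q2 h1 h12 hf1 hf2
    have h2 : 0 < Q2 := h1.trans h12
    set t : ℝ := Q1 / Q2 with ht
    have ht0 : 0 < t := div_pos h1 h2
    have ht1 : t < 1 := (div_lt_one h2).2 h12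
    have htQ : t * Q2 = Q1 := div_mul_cancel₀ Q1 (ne_of_gt h2)
    have hne : (-(c * s) * Q2 : ℝ) ≠ (0 : ℝ) := by
      have : 0 < (c * s) * Q2 := mul_pos ha0 h2
      intro hcon
      rw [neg_mul] at hcon
      linarith [neg_eq_zero.mp hcon]
    have hconv := strictConvexOn_exp.2 (Set.mem_univ (-(c * s) * Q2))
      (Set.mem_univ (0 : ℝ)) hne ht0 (by linarith : (0:ℝ) < 1 - t) (by ring)
    simp only [smul_eq_mul, mul_zero, add_zero, Real.exp_zero, mul_one] at hconv
    have harg : t * (-(c * s) * Q2) = -(c * s) * Q1 := by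
      rw [show t * (-(c * s) * Q2) = -(c * s) * (t * Q2) by ring, htQ]
    rw [harg] at hconv
    -- exp(-(cs)Q1) < t * exp(-(cs)Q2) + (1 - t)
    nlinarith [hconv, mul_pos hP ht0]
  -- Existence when 1 < P*c*s
  have hexist : 1 < P * c * s → ∃ Q : ℝ, 0 < Q ∧ P * (1 - Real.exp (-(c * s) * Q)) = Q := by
    intro h
    have hPa : 1 < P * (c * s) := by nlinarith
    set a := c * s with ha
    set Q0 : ℝ := (P * a - 1) / (2 * a) with hQ0def
    have hQ0pos : 0 < Q0 := div_pos (by linarith) (by linarith)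
    have hQ0eq : Q0 * (2 * a) = P * a - 1 := by
      rw [hQ0def]; exact div_mul_cancel₀ _ (ne_of_gt (by linarith))
    have hQ0P : Q0 < P := by nlinarith [mul_pos (mul_pos hP ha0) ha0]
    set f : ℝ → ℝ := fun Q => P * (1 - Real.exp (-a * Q)) - Q with hf
    have hcont : ContinuousOn f (Set.Icc Q0 P) := by
      apply Continuous.continuousOn
      fun_prop
    -- f Q0 > 0
    have hfQ0 : 0 < f Q0 := by
      have hx : (a * Q0 : ℝ) ≠ 0 := ne_of_gt (mul_pos ha0 hQ0pos)
      have hlt1 := Real.add_one_lt_exp hx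
      have hEpos : 0 < Real.exp (-a * Q0) := Real.exp_pos _
      have hprod : Real.exp (a * Q0) * Real.exp (-a * Q0) = 1 := by
        rw [← Real.exp_add]; ring_nf; exact Real.exp_zero
      -- (1 + a Q0) * exp(-a Q0) < 1
      have hkey : (a * Q0 + 1) * Real.exp (-a * Q0) < 1 := by
        calc (a * Q0 + 1) * Real.exp (-a * Q0)
            < Real.exp (a * Q0) * Real.exp (-a * Q0) :=
              mul_lt_mul_of_pos_right hlt1 hEpos
          _ = 1 := hprod
      simp only [hf]
      nlinarith [mul_pos ha0 hQ0pos, mul_pos hP hEpos, mul_pos ha0 (mul_pos hQ0pos hEpos),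
        mul_pos hP (mul_pos ha0 hQ0pos)]
    -- f P < 0
    have hfP : f P < 0 := by
      simp only [hf]
      nlinarith [Real.exp_pos (-a * P)]
    have hsub := intermediate_value_Ioo' (le_of_lt hQ0P) hcont
    have h0mem : (0 : ℝ) ∈ Set.Ioo (f P) (f Q0) := ⟨hfP, hfQ0⟩
    obtain ⟨Q, hQmem, hQf⟩ := hsub h0mem
    refine ⟨Q, hQ0pos.trans hQmem.1, ?_⟩
    have : P * (1 - Real.exp (-a * Q)) - Q = 0 := hQf
    linarith
  constructor
  · constructor
    · rintro ⟨Q, ⟨hQpos, hQfix⟩, -⟩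
      by_contra h
      push_neg at h
      exact key h Q hQpos hQfix
    · intro h
      obtain ⟨Q, hQpos, hQfix⟩ := hexist h
      refine ⟨Q, ⟨hQpos, hQfix⟩, ?_⟩
      rintro Q' ⟨hQ'pos, hQ'fix⟩
      rcases lt_trichotomy Q' Q with hlt' | heq | hgt
      · exact absurd (hlt Q' Q hQ'pos hlt' hQ'fix hQfix) not_false
      · exact heq
      · exact absurd (hlt Q Q' hQpos hgt hQfix hQ'fix) not_false
  · intro h Q hQ hfix
    rcases eq_or_lt_of_le hQ with heq | hpos
    · exact heq.symm
    · exact absurd (key h Q hpos hfix) not_false
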